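/- Let ω ∈ ℂ with Im ω > 0, let μ ∈ (0, 1), M ≥ 0, and let φ : [0, ∞) → ℂ be a measurable function with |φ(w)| ≤ M·e^{−μw} for all w ≥ 0. Then there exists a constant C > 0 such that for all ρ ∈ (0, 1], the integral ∫₀^∞ e^{iωρ·cosh w}·cosh w·φ(w) dw converges absolutely and |∫₀^∞ e^{iωρ·cosh w}·cosh w·φ(w) dw| ≤ C·ρ^{μ − 1}. (This is the estimate of Lemma 9.2 with μ = π/(2Φ), governing the behavior at the origin of the gradient of the Sommerfeld integral.) -/

import Mathlib

open Complex MeasureTheory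

section Aux
open Set

lemma aux_int {μ : ℝ} (hμ1 : μ < 1) {c : ℝ} (hc : 0 < c) :
    IntegrableOn (fun t : ℝ => t ^ (1 - μ - 1) * Real.exp (-(c * t))) (Set.Ioi 0) := by
  have h0 := Real.GammaIntegral_convergent (s := 1 - μ) (by linarith)
  have h1 := (integrableOn_Ioi_comp_mul_left_iff
    (fun x : ℝ => Real.exp (-x) * x ^ (1 - μ - 1)) 0 hc).mpr (by simpa using h0)
  have h2 : IntegrableOn
      (fun x : ℝ => (c ^ (1 - μ - 1))⁻¹ * (Real.exp (-(c * x)) * (c * x) ^ (1 - μ - 1)))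
      (Set.Ioi 0) := h1.const_mul _
  refine IntegrableOn.congr_fun h2 (fun x hx => ?_) measurableSet_Ioi
  have hx0 : (0:ℝ) < x := hx
  rw [Real.mul_rpow hc.le hx0.le]
  have hcs : (c : ℝ) ^ (1 - μ - 1) ≠ 0 := (Real.rpow_pos_of_pos hc _).ne'
  field_simp

lemma aux_key {μ : ℝ} (hμ1 : μ < 1) {c : ℝ} (hc : 0 < c) :
    IntegrableOn (fun w : ℝ => Real.exp (-(c * Real.exp w)) * Real.exp ((1 - μ) * w)) (Set.Ioi 0) ∧
    ∫ w in Set.Ioi 0, Real.exp (-(c * Real.exp w)) * Real.exp ((1 - μ) * w)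
      ≤ (1 / c) ^ (1 - μ) * Real.Gamma (1 - μ) := by
  set g : ℝ → ℝ := fun t => t ^ (1 - μ - 1) * Real.exp (-(c * t)) with hg
  have hderiv : ∀ x ∈ Set.Ioi (0:ℝ), HasDerivWithinAt Real.exp (Real.exp x) (Set.Ioi 0) x :=
    fun x _ => (Real.hasDerivAt_exp x).hasDerivWithinAt
  have hinj : Set.InjOn Real.exp (Set.Ioi 0) := Real.exp_injective.injOn
  have himg : Real.exp '' Set.Ioi 0 = Set.Ioi 1 := by
    ext t
    constructor
    · rintro ⟨w, hw, rfl⟩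
      simpa using Real.exp_lt_exp.mpr (mem_Ioi.mp hw)
    · intro ht
      exact ⟨Real.log t, Real.log_pos ht, Real.exp_log (lt_trans one_pos ht)⟩
  have hint0 : IntegrableOn g (Set.Ioi 0) := aux_int hμ1 hc
  have hint1 : IntegrableOn g (Set.Ioi 1) := hint0.mono_set (Ioi_subset_Ioi zero_le_one)
  have heq : ∀ x ∈ Set.Ioi (0:ℝ), |Real.exp x| • g (Real.exp x)
      = Real.exp (-(c * Real.exp x)) * Real.exp ((1 - μ) * x) := by
    intro x _
    rw [abs_of_pos (Real.exp_pos x)]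
    simp only [hg, smul_eq_mul]
    rw [show (Real.exp x) ^ (1 - μ - 1) = Real.exp (x * (1 - μ - 1)) from (Real.exp_mul x _).symm,
      show (1 - μ) * x = x + x * (1 - μ - 1) by ring, Real.exp_add]
    ring
  have hiff := integrableOn_image_iff_integrableOn_abs_deriv_smul measurableSet_Ioi hderiv hinj g
  rw [himg] at hiff
  have hint : IntegrableOn
      (fun w : ℝ => Real.exp (-(c * Real.exp w)) * Real.exp ((1 - μ) * w)) (Set.Ioi 0) := by
    refine IntegrableOn.congr_fun (hiff.mp hint1) heq measurableSet_Ioi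
  refine ⟨hint, ?_⟩
  have hI := integral_image_eq_integral_abs_deriv_smul measurableSet_Ioi hderiv hinj g
  rw [himg] at hI
  have h1 : ∫ w in Set.Ioi 0, Real.exp (-(c * Real.exp w)) * Real.exp ((1 - μ) * w)
      = ∫ t in Set.Ioi 1, g t := by
    rw [hI]
    exact (setIntegral_congr_fun measurableSet_Ioi heq).symm
  rw [h1]
  have h2 : ∫ t in Set.Ioi 1, g t ≤ ∫ t in Set.Ioi 0, g t := by
    refine setIntegral_mono_set hint0 ?_ ?_
    · filter_upwards [ae_restrict_mem measurableSet_Ioi] with t ht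
      exact mul_nonneg (Real.rpow_nonneg (le_of_lt ht) _) (Real.exp_pos _).le
    · exact (Ioi_subset_Ioi zero_le_one).eventuallyLE
  refine h2.trans ?_
  rw [Real.integral_rpow_mul_exp_neg_mul_Ioi (by linarith : (0:ℝ) < 1 - μ) hc]

end Aux

theorem sommerfeld_integral_origin_estimate
    (ω : ℂ) (hω : 0 < ω.im) (μ : ℝ) (hμ0 : 0 < μ) (hμ1 : μ < 1)
    (M : ℝ) (hM : 0 ≤ M) (φ : ℝ → ℂ) (hmeas : Measurable φ)
    (hφ : ∀ w : ℝ, 0 ≤ w → ‖φ w‖ ≤ M * Real.exp (-μ * w)) :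
    ∃ C > (0 : ℝ), ∀ ρ : ℝ, 0 < ρ → ρ ≤ 1 →
      IntegrableOn (fun w : ℝ =>
        Complex.exp (I * ω * (ρ : ℂ) * Complex.cosh (w : ℂ)) * Complex.cosh (w : ℂ) * φ w)
        (Set.Ici 0) ∧
      ‖∫ w in Set.Ici (0 : ℝ),
        Complex.exp (I * ω * (ρ : ℂ) * Complex.cosh (w : ℂ)) * Complex.cosh (w : ℂ) * φ w‖
      ≤ C * ρ ^ (μ - 1) := by
  set b := ω.im with hb
  set K : ℝ := M * ((2 / b) ^ (1 - μ) * Real.Gamma (1 - μ)) with hK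
  have hΓ : 0 < Real.Gamma (1 - μ) := Real.Gamma_pos_of_pos (by linarith)
  have hKnn : 0 ≤ K := by positivity
  refine ⟨K + 1, by positivity, fun ρ hρ hρ1 => ?_⟩
  set c : ℝ := b * ρ / 2 with hc
  have hc0 : 0 < c := by positivity
  set f : ℝ → ℂ := fun w =>
    Complex.exp (I * ω * (ρ : ℂ) * Complex.cosh (w : ℂ)) * Complex.cosh (w : ℂ) * φ w with hf
  set G : ℝ → ℝ := fun w => M * (Real.exp (-(c * Real.exp w)) * Real.exp ((1 - μ) * w)) with hG
  -- norm computation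
  have hnorm : ∀ w : ℝ, ‖f w‖
      = Real.exp (-(b * ρ * Real.cosh w)) * Real.cosh w * ‖φ w‖ := by
    intro w
    simp only [hf, norm_mul, Complex.norm_exp]
    rw [← Complex.ofReal_cosh]
    congr 2
    · congr 1
      simp [Complex.mul_re, Complex.mul_im]
      try ring
      exact Or.inl (Or.inl hb.symm)
    · rw [Complex.norm_real, Real.norm_eq_abs, abs_of_pos (Real.cosh_pos w)]
  -- pointwise bound on Ici 0
  have hbound : ∀ w : ℝ, 0 ≤ w → ‖f w‖ ≤ G w := by
    intro w hw
    rw [hnorm]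
    have hch : Real.cosh w ≤ Real.exp w := by
      rw [Real.cosh_eq]
      have := Real.exp_le_exp.mpr (neg_le_self hw)
      linarith
    have hch2 : Real.exp w ≤ 2 * Real.cosh w := by
      rw [Real.cosh_eq]
      have := (Real.exp_pos (-w)).le
      linarith
    have he : Real.exp (-(b * ρ * Real.cosh w)) ≤ Real.exp (-(c * Real.exp w)) := by
      apply Real.exp_le_exp.mpr
      rw [hc]
      nlinarith [Real.cosh_pos (x := w), hω, hρ]
    calc Real.exp (-(b * ρ * Real.cosh w)) * Real.cosh w * ‖φ w‖
        ≤ Real.exp (-(c * Real.exp w)) * Real.exp w * (M * Real.exp (-μ * w)) := by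
          have h1 : (0:ℝ) ≤ Real.cosh w := (Real.cosh_pos w).le
          have h2 : (0:ℝ) ≤ ‖φ w‖ := norm_nonneg _
          exact mul_le_mul (mul_le_mul he hch h1 (Real.exp_pos _).le) (hφ w hw) h2
            (by positivity)
      _ = G w := by
          simp only [hG]
          rw [show (1 - μ) * w = w + -μ * w by ring, Real.exp_add]
          ring
  -- integrability of G on Ici 0
  have hGint : IntegrableOn G (Set.Ici 0) := by
    rw [integrableOn_Ici_iff_integrableOn_Ioi]
    exact ((aux_key hμ1 hc0).1).const_mul M
  -- measurability of f
  have hfmeas : Measurable f := by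
    apply Measurable.mul _ hmeas
    apply Measurable.mul _ (Complex.measurable_cosh.comp Complex.measurable_ofReal)
    exact Complex.measurable_exp.comp
      ((measurable_const.mul (Complex.measurable_cosh.comp Complex.measurable_ofReal)))
  -- integrability of f
  have hfint : IntegrableOn f (Set.Ici 0) := by
    refine Integrable.mono' hGint hfmeas.aestronglyMeasurable.restrict ?_
    filter_upwards [ae_restrict_mem measurableSet_Ici] with w hw
    exact hbound w hw
  refine ⟨hfint, ?_⟩
  calc ‖∫ w in Set.Ici (0:ℝ), f w‖ ≤ ∫ w in Set.Ici (0:ℝ), G w := by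
        refine norm_integral_le_of_norm_le hGint ?_
        filter_upwards [ae_restrict_mem measurableSet_Ici] with w hw
        exact hbound w hw
    _ ≤ K * ρ ^ (μ - 1) := by
        rw [hG, integral_const_mul,
          MeasureTheory.setIntegral_congr_set (MeasureTheory.Ioi_ae_eq_Ici (a := (0:ℝ))).symm]
        have h2 := (aux_key hμ1 hc0).2
        have hpow : (1 / c) ^ (1 - μ) = (2 / b) ^ (1 - μ) * ρ ^ (μ - 1) := by
          rw [hc, show (1 : ℝ) / (b * ρ / 2) = (2 / b) * ρ⁻¹ by field_simp,
            Real.mul_rpow (by positivity) (by positivity),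
            show μ - 1 = -(1 - μ) by ring, Real.rpow_neg hρ.le, Real.inv_rpow hρ.le]
        rw [hK]
        calc M * ∫ w in Set.Ioi 0, Real.exp (-(c * Real.exp w)) * Real.exp ((1 - μ) * w)
            ≤ M * ((1 / c) ^ (1 - μ) * Real.Gamma (1 - μ)) := by gcongr
          _ = M * ((2 / b) ^ (1 - μ) * Real.Gamma (1 - μ)) * ρ ^ (μ - 1) := by
              rw [hpow]; ring
    _ ≤ (K + 1) * ρ ^ (μ - 1) := by
        have : (0:ℝ) < ρ ^ (μ - 1) := Real.rpow_pos_of_pos hρ _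
        nlinarith
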